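/- Let g ∈ R_d be a nonzero homogeneous form of degree d, and let g^⊥ := {f ∈ S : f(g) = 0} where S acts on R by partial derivations. Then g^⊥ is a homogeneous ideal of S and S/g^⊥ is an Artinian Gorenstein graded k-algebra with socle concentrated in degree d. -/

import Mathlib

set_option synthInstance.maxHeartbeats 1000000
set_option maxHeartbeats 1000000

open MvPolynomial

/-- The apolarity action of `S = k[x_1,…,x_N]` on `R = k[y_1,…,y_N]` (`x_i ↦ ∂/∂y_i`). -/
noncomputable def apolar {k : Type*} [Field k] {N : ℕ}
    (f g : MvPolynomial (Fin N) k) : MvPolynomial (Fin N) k :=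
  f.support.sum fun α => g.support.sum fun β =>
    (f.coeff α * g.coeff β * ∏ i, ((β i).descFactorial (α i) : k)) •
      monomial (β - α) (1 : k)

section Lemmas

variable {k : Type*} [Field k] {N : ℕ}

lemma apolar_eq_sum (f g : MvPolynomial (Fin N) k) {T U : Finset (Fin N →₀ ℕ)}
    (hT : f.support ⊆ T) (hU : g.support ⊆ U) :
    apolar f g = ∑ α ∈ T, ∑ β ∈ U,
      (f.coeff α * g.coeff β * ∏ i, ((β i).descFactorial (α i) : k)) •
        monomial (β - α) (1 : k) := by
  rw [apolar]
  rw [Finset.sum_subset hT]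
  · refine Finset.sum_congr rfl fun α hα => Finset.sum_subset hU fun β _ hβ => ?_
    rw [MvPolynomial.notMem_support_iff.mp hβ]
    simp
  · intro α _ hα
    refine Finset.sum_eq_zero fun β _ => ?_
    rw [MvPolynomial.notMem_support_iff.mp hα]
    simp

lemma apolar_monomial (α β : Fin N →₀ ℕ) (a b : k) :
    apolar (monomial α a) (monomial β b)
      = monomial (β - α) (a * b * ∏ i, ((β i).descFactorial (α i) : k)) := by
  rw [apolar_eq_sum (monomial α a) (monomial β b)
    (T := {α}) (U := {β}) support_monomial_subset support_monomial_subset]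
  simp [coeff_monomial, smul_monomial]

lemma apolar_zero_left (g : MvPolynomial (Fin N) k) : apolar 0 g = 0 := by
  simp [apolar]

lemma apolar_zero_right (f : MvPolynomial (Fin N) k) : apolar f 0 = 0 := by
  simp [apolar]

lemma apolar_add_left (f₁ f₂ g : MvPolynomial (Fin N) k) :
    apolar (f₁ + f₂) g = apolar f₁ g + apolar f₂ g := by
  rw [apolar_eq_sum (f₁ + f₂) g (T := f₁.support ∪ f₂.support) (U := g.support)
      (MvPolynomial.support_add) subset_rfl,
    apolar_eq_sum f₁ g (T := f₁.support ∪ f₂.support) (U := g.support)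
      Finset.subset_union_left subset_rfl,
    apolar_eq_sum f₂ g (T := f₁.support ∪ f₂.support) (U := g.support)
      Finset.subset_union_right subset_rfl,
    ← Finset.sum_add_distrib]
  refine Finset.sum_congr rfl fun α _ => ?_
  rw [← Finset.sum_add_distrib]
  refine Finset.sum_congr rfl fun β _ => ?_
  rw [coeff_add, add_mul, add_mul, add_smul]

lemma apolar_add_right (f g₁ g₂ : MvPolynomial (Fin N) k) :
    apolar f (g₁ + g₂) = apolar f g₁ + apolar f g₂ := by
  rw [apolar_eq_sum f (g₁ + g₂) (T := f.support) (U := g₁.support ∪ g₂.support)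
      subset_rfl (MvPolynomial.support_add),
    apolar_eq_sum f g₁ (T := f.support) (U := g₁.support ∪ g₂.support)
      subset_rfl Finset.subset_union_left,
    apolar_eq_sum f g₂ (T := f.support) (U := g₁.support ∪ g₂.support)
      subset_rfl Finset.subset_union_right,
    ← Finset.sum_add_distrib]
  refine Finset.sum_congr rfl fun α _ => ?_
  rw [← Finset.sum_add_distrib]
  refine Finset.sum_congr rfl fun β _ => ?_
  rw [coeff_add, mul_add, add_mul, add_smul]

lemma apolar_smul_left (c : k) (f g : MvPolynomial (Fin N) k) :
    apolar (c • f) g = c • apolar f g := by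
  rw [apolar_eq_sum (c • f) g (T := f.support) (U := g.support)
      (MvPolynomial.support_smul) subset_rfl,
    apolar_eq_sum f g (T := f.support) (U := g.support) subset_rfl subset_rfl,
    Finset.smul_sum]
  refine Finset.sum_congr rfl fun α _ => ?_
  rw [Finset.smul_sum]
  refine Finset.sum_congr rfl fun β _ => ?_
  simp only [MvPolynomial.coeff_smul, smul_eq_mul, smul_smul]
  congr 1
  ring

lemma apolar_smul_right (c : k) (f g : MvPolynomial (Fin N) k) :
    apolar f (c • g) = c • apolar f g := by
  rw [apolar_eq_sum f (c • g) (T := f.support) (U := g.support)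
      subset_rfl (MvPolynomial.support_smul),
    apolar_eq_sum f g (T := f.support) (U := g.support) subset_rfl subset_rfl,
    Finset.smul_sum]
  refine Finset.sum_congr rfl fun α _ => ?_
  rw [Finset.smul_sum]
  refine Finset.sum_congr rfl fun β _ => ?_
  simp only [MvPolynomial.coeff_smul, smul_eq_mul, smul_smul]
  congr 1
  ring

/-- `apolar · g` as a linear map. -/
noncomputable def apolarL (g : MvPolynomial (Fin N) k) :
    MvPolynomial (Fin N) k →ₗ[k] MvPolynomial (Fin N) k where
  toFun f := apolar f g
  map_add' f₁ f₂ := apolar_add_left f₁ f₂ g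
  map_smul' c f := apolar_smul_left c f g

/-- `apolar f ·` as a linear map. -/
noncomputable def apolarR (f : MvPolynomial (Fin N) k) :
    MvPolynomial (Fin N) k →ₗ[k] MvPolynomial (Fin N) k where
  toFun g := apolar f g
  map_add' g₁ g₂ := apolar_add_right f g₁ g₂
  map_smul' c g := apolar_smul_right c f g

lemma descFactorial_add' (b a c : ℕ) :
    b.descFactorial (a + c) = b.descFactorial c * (b - c).descFactorial a := by
  induction a with
  | zero => simp
  | succ n ih =>
    rw [Nat.succ_add, Nat.descFactorial_succ, ih, Nat.descFactorial_succ, Nat.sub_sub,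
      Nat.add_comm c n]
    ring

lemma apolar_mul (f h g : MvPolynomial (Fin N) k) :
    apolar (f * h) g = apolar f (apolar h g) := by
  induction f using MvPolynomial.induction_on' with
  | add p q hp hq => rw [add_mul, apolar_add_left, apolar_add_left, hp, hq]
  | monomial α a =>
    induction h using MvPolynomial.induction_on' with
    | add p q hp hq =>
      rw [mul_add, apolar_add_left, apolar_add_left, apolar_add_right, hp, hq]
    | monomial γ c =>
      induction g using MvPolynomial.induction_on' with
      | add p q hp hq => rw [apolar_add_right, apolar_add_right, apolar_add_right, hp, hq]
      | monomial β b =>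
        rw [monomial_mul, apolar_monomial, apolar_monomial, apolar_monomial]
        have h1 : β - (α + γ) = β - γ - α := by rw [tsub_tsub, add_comm γ α]
        have h2 : ∀ i : Fin N, ((β i).descFactorial ((α + γ) i) : k)
            = ((β i).descFactorial (γ i) : k) * (((β - γ) i).descFactorial (α i) : k) := by
          intro i
          rw [Finsupp.add_apply, Finsupp.tsub_apply, descFactorial_add', Nat.cast_mul]
        rw [h1, Finset.prod_congr rfl (fun i _ => h2 i), Finset.prod_mul_distrib]
        congr 1
        ring

lemma coeff_apolar (f g : MvPolynomial (Fin N) k) (γ : Fin N →₀ ℕ) :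
    coeff γ (apolar f g) = ∑ α ∈ f.support, ∑ β ∈ g.support,
      if β - α = γ then f.coeff α * g.coeff β * ∏ i, ((β i).descFactorial (α i) : k)
      else 0 := by
  rw [apolar, coeff_sum]
  refine Finset.sum_congr rfl fun α _ => ?_
  rw [coeff_sum]
  refine Finset.sum_congr rfl fun β _ => ?_
  rw [MvPolynomial.coeff_smul, coeff_monomial]
  simp [mul_ite]

lemma prod_desc_eq_zero {α β : Fin N →₀ ℕ} (h : ¬ α ≤ β) :
    ∏ i, ((β i).descFactorial (α i) : k) = 0 := by
  rw [Finsupp.le_def] at h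
  push_neg at h
  obtain ⟨i, hi⟩ := h
  refine Finset.prod_eq_zero (Finset.mem_univ i) ?_
  rw [Nat.descFactorial_eq_zero_iff_lt.mpr hi, Nat.cast_zero]

lemma degree_add' (a b : Fin N →₀ ℕ) : (a + b).degree = a.degree + b.degree := by
  simp [Finsupp.degree_eq_weight_one, map_add]

lemma degree_tsub {α β : Fin N →₀ ℕ} (h : α ≤ β) :
    (β - α).degree = β.degree - α.degree := by
  have h2 : β - α + α = β := tsub_add_cancel_of_le h
  have h3 := degree_add' (β - α) α
  rw [h2] at h3
  omega

lemma le_of_degrees {α β : Fin N →₀ ℕ} (h : α ≤ β) : α.degree ≤ β.degree := by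
  have h2 : β - α + α = β := tsub_add_cancel_of_le h
  have h3 := degree_add' (β - α) α
  rw [h2] at h3
  omega

lemma isHom_degree {g : MvPolynomial (Fin N) k} {dd : ℕ} (hg : g.IsHomogeneous dd)
    {β : Fin N →₀ ℕ} (hβ : β ∈ g.support) : β.degree = dd := by
  rw [Finsupp.degree_eq_weight_one]
  exact hg (MvPolynomial.mem_support_iff.mp hβ)

lemma apolar_isHomogeneous {f g : MvPolynomial (Fin N) k} {n dd : ℕ}
    (hf : f.IsHomogeneous n) (hg : g.IsHomogeneous dd) :
    apolar f g ∈ homogeneousSubmodule (Fin N) k (dd - n) := by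
  rw [apolar]
  refine Submodule.sum_mem _ fun α hα => Submodule.sum_mem _ fun β hβ => ?_
  by_cases hle : α ≤ β
  · refine Submodule.smul_mem _ _ ?_
    rw [mem_homogeneousSubmodule]
    refine isHomogeneous_monomial _ ?_
    rw [degree_tsub hle, isHom_degree hf hα, isHom_degree hg hβ]
  · rw [prod_desc_eq_zero hle, mul_zero, zero_smul]
    exact Submodule.zero_mem _

lemma apolar_eq_zero_of_gt {f g : MvPolynomial (Fin N) k} {n dd : ℕ}
    (hf : f.IsHomogeneous n) (hg : g.IsHomogeneous dd) (h : dd < n) :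
    apolar f g = 0 := by
  rw [apolar]
  refine Finset.sum_eq_zero fun α hα => Finset.sum_eq_zero fun β hβ => ?_
  have hle : ¬ α ≤ β := by
    intro hle
    have := le_of_degrees hle
    rw [isHom_degree hf hα, isHom_degree hg hβ] at this
    omega
  rw [prod_desc_eq_zero hle, mul_zero, zero_smul]

lemma apolar_monomial_one {g : MvPolynomial (Fin N) k} {dd : ℕ} (hg : g.IsHomogeneous dd)
    {α : Fin N →₀ ℕ} (hα : α.degree = dd) :
    apolar (monomial α (1 : k)) g = C (coeff α g * ∏ i, (Nat.factorial (α i) : k)) := by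
  conv_lhs => rw [g.as_sum]
  rw [show apolar (monomial α (1:k)) (∑ β ∈ g.support, monomial β (coeff β g))
      = ∑ β ∈ g.support, apolar (monomial α (1:k)) (monomial β (coeff β g)) from
    map_sum (apolarR (monomial α (1:k))) _ _]
  rw [Finset.sum_eq_single α]
  · by_cases hαs : α ∈ g.support
    · rw [apolar_monomial, tsub_self, one_mul, C_apply]
      congr 1
      congr 1
      exact Finset.prod_congr rfl fun i _ => by rw [Nat.descFactorial_self]
    · rw [MvPolynomial.notMem_support_iff.mp hαs]
      simp [apolar_monomial, apolar_zero_right]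
  · intro β hβ hne
    rw [apolar_monomial]
    have hle : ¬ α ≤ β := by
      intro hle
      have h1 : (β - α).degree = 0 := by
        rw [degree_tsub hle, hα, isHom_degree hg hβ]
        omega
      rw [Finsupp.degree_eq_zero_iff] at h1
      have : β = α := by
        have := tsub_add_cancel_of_le hle
        rw [h1, zero_add] at this
        exact this.symm
      exact hne this
    rw [prod_desc_eq_zero hle, mul_zero, map_zero]
  · intro hαs
    rw [MvPolynomial.notMem_support_iff.mp hαs, apolar_monomial]
    simp

lemma prod_desc_single (β : Fin N →₀ ℕ) (i : Fin N) :
    ∏ j, ((β j).descFactorial ((Finsupp.single i 1) j) : k) = (β i : k) := by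
  rw [Finset.prod_eq_single i]
  · rw [Finsupp.single_eq_same, Nat.descFactorial_one]
  · intro j _ hj
    rw [Finsupp.single_eq_of_ne' (Ne.symm hj), Nat.descFactorial_zero, Nat.cast_one]
  · exact fun h => absurd (Finset.mem_univ i) h

lemma eq_C_of_apolar_X [CharZero k] (h : MvPolynomial (Fin N) k)
    (H : ∀ i, apolar (X i) h = 0) : h = C (coeff 0 h) := by
  ext β
  by_cases hβ : β = 0
  · subst hβ; simp
  · rw [coeff_C, if_neg (Ne.symm hβ)]
    by_cases hβs : β ∈ h.support
    swap
    · exact MvPolynomial.notMem_support_iff.mp hβs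
    obtain ⟨i, hi⟩ : ∃ i, β i ≠ 0 := by
      by_contra hc
      push_neg at hc
      exact hβ (Finsupp.ext hc)
    have key := congrArg (coeff (β - Finsupp.single i 1)) (H i)
    rw [coeff_apolar, coeff_zero, support_X, Finset.sum_singleton] at key
    have hXc : coeff (Finsupp.single i 1) (X i : MvPolynomial (Fin N) k) = 1 := by
      simp [X, coeff_monomial]
    rw [Finset.sum_eq_single β] at key
    · rw [if_pos rfl, hXc, one_mul, prod_desc_single] at key
      have : (β i : k) ≠ 0 := Nat.cast_ne_zero.mpr hi
      rcases mul_eq_zero.mp key with key | key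
      · exact key
      · exact absurd key this
    · intro β' hβ' hne
      by_cases hcond : β' - Finsupp.single i 1 = β - Finsupp.single i 1
      · rw [if_pos hcond, hXc, one_mul, prod_desc_single]
        by_cases hβ'i : β' i = 0
        · rw [hβ'i, Nat.cast_zero, mul_zero]
        · exfalso
          apply hne
          have h1 : Finsupp.single i 1 ≤ β' := Finsupp.single_le_iff.mpr (Nat.one_le_iff_ne_zero.mpr hβ'i)
          have h2 : Finsupp.single i 1 ≤ β := Finsupp.single_le_iff.mpr (Nat.one_le_iff_ne_zero.mpr hi)
          have := congrArg (· + Finsupp.single i 1) hcond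
          simpa [tsub_add_cancel_of_le h1, tsub_add_cancel_of_le h2] using this
      · rw [if_neg hcond]
    · intro hβs'
      exact absurd hβs hβs'

end Lemmas

/-- Let `g` be a nonzero form of degree `d`.  Then `g^⊥ = {f ∈ S : f(g) = 0}` is a
homogeneous ideal of `S`, and `S/g^⊥` is an Artinian (finite-dimensional) Gorenstein graded
`k`-algebra with socle concentrated in degree `d` (the socle is a line, and every socle
element is the class of a homogeneous polynomial of degree `d`). -/
theorem stmt_4 (k : Type*) [Field k] [CharZero k] (N d : ℕ)
    (g : MvPolynomial (Fin N) k) (hg : g ≠ 0) (hgd : g ∈ homogeneousSubmodule (Fin N) k d) :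
    ∃ I : Ideal (MvPolynomial (Fin N) k),
      (∀ f, f ∈ I ↔ apolar f g = 0) ∧
      (∀ f ∈ I, ∀ n : ℕ, homogeneousComponent n f ∈ I) ∧
      FiniteDimensional k (MvPolynomial (Fin N) k ⧸ I) ∧
      (∃ a : MvPolynomial (Fin N) k ⧸ I, a ≠ 0 ∧
        ∀ b : MvPolynomial (Fin N) k ⧸ I,
          ((∀ i : Fin N, Ideal.Quotient.mk I (X i) * b = 0) ↔ ∃ c : k, b = c • a)) ∧
      (∀ b : MvPolynomial (Fin N) k ⧸ I,
        (∀ i : Fin N, Ideal.Quotient.mk I (X i) * b = 0) →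
        ∃ p ∈ homogeneousSubmodule (Fin N) k d, Ideal.Quotient.mk I p = b) := by
  have hgh : g.IsHomogeneous d := hgd
  let I : Ideal (MvPolynomial (Fin N) k) :=
    { carrier := {f | apolar f g = 0}
      add_mem' := fun {a b} ha hb => by
        simp only [Set.mem_setOf_eq] at *
        rw [apolar_add_left, ha, hb, add_zero]
      zero_mem' := apolar_zero_left g
      smul_mem' := fun c f hf => by
        simp only [Set.mem_setOf_eq, smul_eq_mul] at *
        rw [apolar_mul, hf, apolar_zero_right] }
  have hmemI : ∀ f, f ∈ I ↔ apolar f g = 0 := fun f => Iff.rfl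
  have hfc : ∀ (f : MvPolynomial (Fin N) k) (m : ℕ),
      (homogeneousComponent m f).IsHomogeneous m := fun f m =>
    homogeneousComponent_isHomogeneous m f
  -- homogeneous components of elements of I stay in I
  have hhomog : ∀ f ∈ I, ∀ n : ℕ, homogeneousComponent n f ∈ I := by
    intro f hf n
    rw [hmemI]
    by_cases hnd : d < n
    · exact apolar_eq_zero_of_gt (hfc f n) hgh hnd
    push_neg at hnd
    by_cases hD : f.totalDegree < n
    · rw [homogeneousComponent_eq_zero n f hD, apolar_zero_left]
    push_neg at hD
    have h0 : apolar f g = 0 := hf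
    have e1 : ∑ m ∈ Finset.range (f.totalDegree + 1),
        apolar (homogeneousComponent m f) g = 0 := by
      have h2 := map_sum (apolarL g) (fun m => homogeneousComponent m f)
        (Finset.range (f.totalDegree + 1))
      simp only [apolarL, LinearMap.coe_mk, AddHom.coe_mk] at h2
      rw [← h2, sum_homogeneousComponent, h0]
    have e2 := congrArg (fun q => homogeneousComponent (d - n) q) e1
    simp only [map_zero] at e2
    rw [map_sum] at e2
    rw [Finset.sum_eq_single n] at e2
    · rw [homogeneousComponent_of_mem (apolar_isHomogeneous (hfc f n) hgh),
        if_pos rfl] at e2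
      exact e2
    · intro m _ hmn
      by_cases hmd : d < m
      · rw [apolar_eq_zero_of_gt (hfc f m) hgh hmd, map_zero]
      · rw [homogeneousComponent_of_mem (apolar_isHomogeneous (hfc f m) hgh), if_neg]
        omega
    · intro hn
      exact absurd (Finset.mem_range.mpr (by omega)) hn
  -- finite dimensionality
  have hfin : FiniteDimensional k (MvPolynomial (Fin N) k ⧸ I) := by
    let φ : restrictTotalDegree (Fin N) k d →ₗ[k] (MvPolynomial (Fin N) k ⧸ I) :=
      (Ideal.Quotient.mkₐ k I).toLinearMap.comp (Submodule.subtype _)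
    refine Module.Finite.of_surjective φ ?_
    intro x
    obtain ⟨f, rfl⟩ := Ideal.Quotient.mk_surjective x
    set M := max f.totalDegree d with hM
    set f' := ∑ n ∈ Finset.range (d + 1), homogeneousComponent n f with hf'def
    have hf' : f' ∈ restrictTotalDegree (Fin N) k d := by
      rw [mem_restrictTotalDegree]
      refine le_trans (totalDegree_finset_sum _ _) ?_
      refine Finset.sup_le fun n hn => ?_
      refine le_trans (hfc f n).totalDegree_le ?_
      have := Finset.mem_range.mp hn
      omega
    have hfull : f = ∑ n ∈ Finset.range (M + 1), homogeneousComponent n f := by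
      rw [← Finset.sum_subset (Finset.range_subset_range.mpr
          (by omega : f.totalDegree + 1 ≤ M + 1))
        (fun n _ hn => homogeneousComponent_eq_zero n f
          (by (have := Finset.mem_range.not.mp hn); omega))]
      exact (sum_homogeneousComponent f).symm
    have hsub : f - f' ∈ I := by
      have hrepr : f - f' = ∑ n ∈ Finset.range (M + 1) \ Finset.range (d + 1),
          homogeneousComponent n f := by
        rw [eq_comm, eq_sub_iff_add_eq, hf'def, Finset.sum_sdiff
          (Finset.range_subset_range.mpr (by omega : d + 1 ≤ M + 1))]
        exact hfull.symm
      rw [hrepr]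
      refine Submodule.sum_mem _ fun n hn => ?_
      rw [hmemI]
      have hdn : d < n := by
        have h1 := (Finset.mem_sdiff.mp hn).2
        have := Finset.mem_range.not.mp h1
        omega
      exact apolar_eq_zero_of_gt (hfc f n) hgh hdn
    refine ⟨⟨f', hf'⟩, ?_⟩
    show Ideal.Quotient.mk I f' = Ideal.Quotient.mk I f
    rw [Ideal.Quotient.eq]
    have := I.neg_mem hsub
    rwa [neg_sub] at this
  -- the socle generator
  obtain ⟨α₀, hα₀⟩ := MvPolynomial.support_nonempty.mpr hg
  have hα₀d : α₀.degree = d := isHom_degree hgh hα₀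
  have hc0 : coeff α₀ g * ∏ i, (Nat.factorial (α₀ i) : k) ≠ 0 :=
    mul_ne_zero (MvPolynomial.mem_support_iff.mp hα₀)
      (Finset.prod_ne_zero_iff.mpr fun i _ =>
        Nat.cast_ne_zero.mpr (Nat.factorial_ne_zero _))
  set c₀ := (coeff α₀ g * ∏ i, (Nat.factorial (α₀ i) : k))⁻¹ with hc₀def
  set p := monomial α₀ c₀ with hpdef
  have hp1 : apolar p g = 1 := by
    have hps : p = c₀ • monomial α₀ (1 : k) := by
      rw [smul_monomial, smul_eq_mul, mul_one]
    rw [hps, apolar_smul_left, apolar_monomial_one hgh hα₀d, smul_eq_C_mul, ← C_mul,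
      inv_mul_cancel₀ hc0, C_1]
  have hmk_smul : ∀ (c : k) (q : MvPolynomial (Fin N) k),
      Ideal.Quotient.mk I (c • q) = c • Ideal.Quotient.mk I q := fun c q => by
    rw [← Ideal.Quotient.mkₐ_eq_mk k I]
    exact map_smul (Ideal.Quotient.mkₐ k I) c q
  have hX1 : ∀ i : Fin N, apolar (X i) (1 : MvPolynomial (Fin N) k) = 0 := by
    intro i
    have h1 : (1 : MvPolynomial (Fin N) k) = monomial 0 1 := by rw [← C_1, C_apply]
    have h2 : (X i : MvPolynomial (Fin N) k) = monomial (Finsupp.single i 1) 1 := rfl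
    rw [h1, h2, apolar_monomial, prod_desc_eq_zero, mul_zero, monomial_zero]
    intro hle
    have := Finsupp.single_le_iff.mp hle
    simp at this
  have ha : (Ideal.Quotient.mk I p : MvPolynomial (Fin N) k ⧸ I) ≠ 0 := by
    intro h0
    have h1 : p ∈ I := Ideal.Quotient.eq_zero_iff_mem.mp h0
    have h2 : apolar p g = 0 := h1
    rw [hp1] at h2
    exact one_ne_zero h2
  -- the socle characterization
  have hsocle : ∀ b : MvPolynomial (Fin N) k ⧸ I,
      ((∀ i : Fin N, Ideal.Quotient.mk I (X i) * b = 0) ↔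
        ∃ c : k, b = c • Ideal.Quotient.mk I p) := by
    intro b
    constructor
    · intro hb
      obtain ⟨f, rfl⟩ := Ideal.Quotient.mk_surjective b
      have hfi : ∀ i, apolar (X i) (apolar f g) = 0 := by
        intro i
        have h1 := hb i
        rw [← map_mul] at h1
        have hmem : X i * f ∈ I := Ideal.Quotient.eq_zero_iff_mem.mp h1
        have h2 : apolar (X i * f) g = 0 := hmem
        rwa [apolar_mul] at h2
      obtain ⟨c, hC⟩ : ∃ c : k, apolar f g = C c := ⟨_, eq_C_of_apolar_X (apolar f g) hfi⟩
      refine ⟨c, ?_⟩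
      have hdiff : f - c • p ∈ I := by
        rw [hmemI, sub_eq_add_neg, apolar_add_left, hC,
          show -(c • p) = (-c) • p from (neg_smul c p).symm,
          apolar_smul_left, hp1, smul_eq_C_mul, mul_one, ← C_add, add_neg_cancel, C_0]
      exact (Ideal.Quotient.eq.mpr hdiff).trans (hmk_smul _ p)
    · rintro ⟨c, rfl⟩ i
      rw [← hmk_smul c p, ← map_mul]
      refine Ideal.Quotient.eq_zero_iff_mem.mpr ?_
      rw [hmemI, apolar_mul, apolar_smul_left, hp1, apolar_smul_right, hX1, smul_zero]
  refine ⟨I, hmemI, hhomog, hfin, ⟨Ideal.Quotient.mk I p, ha, hsocle⟩, ?_⟩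
  intro b hb
  obtain ⟨c, rfl⟩ := (hsocle b).mp hb
  refine ⟨c • p, ?_, (hmk_smul c p)⟩
  exact Submodule.smul_mem _ c
    ((mem_homogeneousSubmodule _ _).mpr (isHomogeneous_monomial c₀ hα₀d))
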